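/- Let ψ_{XYB} = (1/|X|) ∑_{x,z} P(z) |x⟩⟨x|_X ⊗ |x+z⟩⟨x+z|_Y ⊗ σ_z (addition in ZMod d, σ_z density matrices on H_B, P a probability distribution), and let ρ_{YB} = ∑_y P(y) |y⟩⟨y|_Y ⊗ σ_y. Then the von Neumann conditional entropies satisfy H(X|YB)_ψ = H(Y|B)_ρ. -/

import Mathlib

open scoped ComplexOrder
/-- Von Neumann entropy (base 2) of a Hermitian matrix, via its eigenvalues. -/
noncomputable def vnEntropy {n : Type*} [Fintype n] [DecidableEq n]
    {ρ : Matrix n n ℂ} (h : ρ.IsHermitian) : ℝ :=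
  ∑ i, -(h.eigenvalues i * Real.logb 2 (h.eigenvalues i))


namespace VNAux

open Polynomial Matrix

variable {n : Type*} [Fintype n] [DecidableEq n]

/-- The multiset of (real) eigenvalues of a Hermitian matrix. -/
noncomputable def spec {A : Matrix n n ℂ} (hA : A.IsHermitian) : Multiset ℝ :=
  Finset.univ.val.map hA.eigenvalues

lemma charpoly_conj_diag (U : Matrix n n ℂ) (hU : U * star U = 1) (v : n → ℂ) :
    (U * diagonal v * star U).charpoly = ∏ i, (X - C (v i)) := by
  classical
  set f := (C : ℂ →+* ℂ[X])
  have h1 : f.mapMatrix U * f.mapMatrix (star U) = 1 := by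
    rw [← _root_.map_mul, hU, _root_.map_one]
  have hscalar : Matrix.scalar n (X : ℂ[X]) = (X : ℂ[X]) • (1 : Matrix n n ℂ[X]) := by
    ext i j
    by_cases h : i = j <;> simp [Matrix.scalar_apply, Matrix.one_apply, h,
      Matrix.diagonal_apply]
  have key : charmatrix (U * diagonal v * star U)
      = f.mapMatrix U * charmatrix (diagonal v) * f.mapMatrix (star U) := by
    rw [charmatrix, charmatrix, hscalar, mul_sub, sub_mul, mul_smul_comm, smul_mul_assoc,
      mul_one, h1, _root_.map_mul, _root_.map_mul]
  have hdiag : charmatrix (diagonal v) = diagonal (fun i => (X : ℂ[X]) - C (v i)) := by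
    ext i j
    by_cases h : i = j
    · subst h; simp
    · simp [charmatrix_apply_ne _ _ _ h, Matrix.diagonal_apply_ne _ h]
  have hdet : (f.mapMatrix U).det * (f.mapMatrix (star U)).det = 1 := by
    rw [← det_mul, h1, det_one]
  calc (U * diagonal v * star U).charpoly
      = (f.mapMatrix U).det * (charmatrix (diagonal v)).det * (f.mapMatrix (star U)).det := by
        rw [charpoly, key, det_mul, det_mul]
    _ = (charmatrix (diagonal v)).det * ((f.mapMatrix U).det * (f.mapMatrix (star U)).det) := by
        ring
    _ = ∏ i, (X - C (v i)) := by rw [hdet, mul_one, hdiag, det_diagonal]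

lemma charpoly_hermitian_smul (r : ℝ) {A : Matrix n n ℂ} (hA : A.IsHermitian) :
    ((r : ℂ) • A).charpoly = ∏ i, (X - C (((r * hA.eigenvalues i : ℝ)) : ℂ)) := by
  have hU := Matrix.mem_unitaryGroup_iff.mp (hA.eigenvectorUnitary).2
  have hEq : (r : ℂ) • A = (hA.eigenvectorUnitary : Matrix n n ℂ) *
      diagonal (fun i => (((r * hA.eigenvalues i : ℝ)) : ℂ)) *
      star (hA.eigenvectorUnitary : Matrix n n ℂ) := by
    conv_lhs => rw [hA.spectral_theorem, Unitary.conjStarAlgAut_apply]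
    rw [show ((r:ℂ) • ((hA.eigenvectorUnitary : Matrix n n ℂ) *
        diagonal (RCLike.ofReal ∘ hA.eigenvalues) *
        star (hA.eigenvectorUnitary : Matrix n n ℂ)) =
        (hA.eigenvectorUnitary : Matrix n n ℂ) *
        ((r:ℂ) • diagonal (RCLike.ofReal ∘ hA.eigenvalues)) *
        star (hA.eigenvectorUnitary : Matrix n n ℂ)) from by
      rw [mul_smul_comm, smul_mul_assoc]]
    congr 2
    ext i j
    rcases eq_or_ne i j with h | h
    · simp [h, Matrix.diagonal_apply_eq, Complex.ofReal_mul]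
    · simp [Matrix.diagonal_apply_ne _ h, h]
  rw [hEq, charpoly_conj_diag _ hU]

lemma charpoly_hermitian {A : Matrix n n ℂ} (hA : A.IsHermitian) :
    A.charpoly = ∏ i, (X - C ((hA.eigenvalues i : ℂ))) := by
  have := charpoly_hermitian_smul 1 hA
  simpa using this

lemma roots_prod_X_sub_C' (g : n → ℂ) :
    (∏ i, (X - C (g i))).roots = Finset.univ.val.map g := by
  rw [roots_prod _ _ (monic_prod_of_monic _ _ fun i _ => monic_X_sub_C _).ne_zero]
  simp [roots_X_sub_C, Multiset.bind_singleton]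

lemma roots_charpoly_hermitian {A : Matrix n n ℂ} (hA : A.IsHermitian) :
    A.charpoly.roots = (spec hA).map (fun x : ℝ => (x : ℂ)) := by
  rw [charpoly_hermitian hA, roots_prod_X_sub_C', spec, Multiset.map_map]
  rfl

lemma spec_unique {A : Matrix n n ℂ} (hA : A.IsHermitian) (v : Multiset ℝ)
    (h : A.charpoly.roots = v.map (fun x : ℝ => (x : ℂ))) : spec hA = v :=
  Multiset.map_injective Complex.ofReal_injective
    ((roots_charpoly_hermitian hA).symm.trans h)

lemma charpoly_blockDiagonal {k : Type*} [Fintype k] [DecidableEq k]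
    (M : k → Matrix n n ℂ) :
    (blockDiagonal M).charpoly = ∏ i, (M i).charpoly := by
  have h : charmatrix (blockDiagonal M) = blockDiagonal fun i => charmatrix (M i) := by
    ext ⟨a, i⟩ ⟨b, j⟩
    by_cases hij : i = j
    · subst hij
      by_cases hab : a = b
      · subst hab; simp [blockDiagonal_apply, charmatrix_apply, diagonal_apply]
      · simp [blockDiagonal_apply, charmatrix_apply, diagonal_apply, hab, Prod.ext_iff]
    · simp [blockDiagonal_apply, charmatrix_apply, diagonal_apply, hij, Prod.ext_iff]
  rw [charpoly, h, det_blockDiagonal]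
  rfl

lemma spec_sum_eq_trace {A : Matrix n n ℂ} (hA : A.IsHermitian) :
    (((spec hA).map (fun x : ℝ => (x : ℂ))).sum) = A.trace := by
  have hU := Matrix.mem_unitaryGroup_iff'.mp (hA.eigenvectorUnitary).2
  conv_rhs => rw [hA.spectral_theorem, Unitary.conjStarAlgAut_apply]
  rw [trace_mul_comm, ← mul_assoc, hU, one_mul, trace_diagonal]
  rw [spec, Multiset.map_map]
  rw [Finset.sum]
  rfl

lemma spec_sum_real {A : Matrix n n ℂ} (hA : A.IsHermitian) (c : ℝ)
    (h : A.trace = (c : ℂ)) : (spec hA).sum = c := by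
  have h2 := spec_sum_eq_trace hA
  rw [h] at h2
  have h3 : (((spec hA).sum : ℝ) : ℂ) = (c : ℂ) := by
    rw [← h2]
    simpa using (map_multiset_sum (Complex.ofRealHom) (spec hA))
  exact_mod_cast h3

lemma vnEntropy_spec {A : Matrix n n ℂ} (hA : A.IsHermitian) :
    vnEntropy hA = ((spec hA).map (fun t => -(t * Real.logb 2 t))).sum := by
  rw [spec, Multiset.map_map, vnEntropy, Finset.sum]
  rfl

lemma bind_eq_sum {ι β : Type*} (s : Finset ι) (g : ι → Multiset β) :
    s.val.bind g = ∑ i ∈ s, g i := by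
  classical
  induction s using Finset.cons_induction with
  | empty => simp
  | cons a s ha ih =>
      rw [Finset.cons_val, Multiset.cons_bind, ih, Finset.sum_cons]

lemma map_sum_msum {ι : Type*} (s : Finset ι) (M : ι → Multiset ℝ) (f : ℝ → ℝ) :
    ((∑ i ∈ s, M i).map f).sum = ∑ i ∈ s, ((M i).map f).sum := by
  classical
  induction s using Finset.cons_induction with
  | empty => simp
  | cons a s ha ih =>
      rw [Finset.sum_cons, Finset.sum_cons, Multiset.map_add, Multiset.sum_add, ih]

lemma f_scale {t : ℝ} (ht : 0 ≤ t) {d : ℕ} (hd : d ≠ 0) :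
    -(((d : ℝ)⁻¹ * t) * Real.logb 2 ((d : ℝ)⁻¹ * t))
      = (d : ℝ)⁻¹ * (-(t * Real.logb 2 t)) + (d : ℝ)⁻¹ * t * Real.logb 2 d := by
  rcases ht.eq_or_lt with rfl | h
  · simp
  · have hd0 : (0 : ℝ) < d := by
      exact_mod_cast Nat.pos_of_ne_zero hd
    rw [Real.logb_mul (by positivity) h.ne', Real.logb_inv]
    ring

lemma inner_sum (m : Multiset ℝ) (hm : ∀ t ∈ m, 0 ≤ t) {d : ℕ} (hd : d ≠ 0) :
    (((m.map (fun t => (d : ℝ)⁻¹ * t)).map (fun t => -(t * Real.logb 2 t))).sum)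
      = (d : ℝ)⁻¹ * ((m.map (fun t => -(t * Real.logb 2 t))).sum)
        + (d : ℝ)⁻¹ * Real.logb 2 d * m.sum := by
  rw [Multiset.map_map]
  have hcongr : m.map ((fun t => -(t * Real.logb 2 t)) ∘ (fun t => (d : ℝ)⁻¹ * t))
      = m.map (fun t => (d : ℝ)⁻¹ * (-(t * Real.logb 2 t))
          + ((d : ℝ)⁻¹ * Real.logb 2 d) * t) := by
    refine Multiset.map_congr rfl fun t ht => ?_
    have := f_scale (hm t ht) hd
    simpa [mul_comm, mul_assoc, mul_left_comm] using this
  rw [hcongr, Multiset.sum_map_add, Multiset.sum_map_mul_left, Multiset.sum_map_mul_left]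
  simp [mul_assoc]

end VNAux

namespace VNAux

lemma map_msum {ι α β : Type*} (s : Finset ι) (M : ι → Multiset α) (f : α → β) :
    (∑ i ∈ s, M i).map f = ∑ i ∈ s, (M i).map f := by
  classical
  induction s using Finset.cons_induction with
  | empty => simp
  | cons a s ha ih =>
      rw [Finset.sum_cons, Finset.sum_cons, Multiset.map_add, ih]

lemma map_mul_sum (m : Multiset ℝ) (c : ℝ) : (m.map (fun t => c * t)).sum = c * m.sum := by
  simpa using Multiset.sum_map_mul_left (s := m) (a := c) (f := id)

end VNAux

open VNAux Polynomial Matrix in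
/-- For `ψ_{XYB} = (1/d) ∑_{x,z} P(z)|x⟩⟨x|⊗|x+z⟩⟨x+z|⊗σ_z` and
`ρ_{YB} = ∑_y P(y)|y⟩⟨y|⊗σ_y`, the von Neumann conditional entropies satisfy
`H(X|YB)_ψ = H(Y|B)_ρ`. -/
theorem stmt_17 (d : ℕ) [NeZero d] (B : Type) [Fintype B] [DecidableEq B]
    (P : ZMod d → ℝ) (hP : ∀ z, 0 ≤ P z) (hPsum : ∑ z : ZMod d, P z = 1)
    (σ : ZMod d → Matrix B B ℂ)
    (hσ : ∀ z, (σ z).PosSemidef) (hσtr : ∀ z, (σ z).trace = 1)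
    (ψXYB : Matrix ((ZMod d × ZMod d) × B) ((ZMod d × ZMod d) × B) ℂ)
    (hψXYB : ψXYB = fun a b =>
      if a.1 = b.1 then
        ((d : ℂ)⁻¹) * (P (a.1.2 - a.1.1) : ℂ) * σ (a.1.2 - a.1.1) a.2 b.2
      else 0)
    (ψYB : Matrix (ZMod d × B) (ZMod d × B) ℂ)
    (hψYB : ψYB = fun a b =>
      if a.1 = b.1 then
        ((d : ℂ)⁻¹) * ∑ z : ZMod d, (P z : ℂ) * σ z a.2 b.2
      else 0)
    (ρYB : Matrix (ZMod d × B) (ZMod d × B) ℂ)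
    (hρYB : ρYB = fun a b =>
      if a.1 = b.1 then (P a.1 : ℂ) * σ a.1 a.2 b.2 else 0)
    (ρB : Matrix B B ℂ)
    (hρB : ρB = ∑ z : ZMod d, (P z : ℂ) • σ z)
    (hXYB : ψXYB.IsHermitian) (hYB : ψYB.IsHermitian)
    (hYBρ : ρYB.IsHermitian) (hBρ : ρB.IsHermitian) :
    vnEntropy hXYB - vnEntropy hYB = vnEntropy hYBρ - vnEntropy hBρ := by
  classical
  have hd : d ≠ 0 := NeZero.ne d
  have hd0 : (0 : ℝ) < d := by exact_mod_cast Nat.pos_of_ne_zero hd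
  set L : ℝ := Real.logb 2 d with hLdef
  set f : ℝ → ℝ := fun t => -(t * Real.logb 2 t) with hfdef
  -- eigenvalue multisets of the σ z
  set E : ZMod d → Multiset ℝ := fun z => spec (hσ z).1 with hEdef
  have hEnn : ∀ z, ∀ t ∈ E z, 0 ≤ t := by
    intro z t ht
    obtain ⟨i, -, rfl⟩ := Multiset.mem_map.mp ht
    exact (hσ z).eigenvalues_nonneg i
  have hEsum : ∀ z, (E z).sum = 1 := fun z =>
    spec_sum_real _ 1 (by simpa using hσtr z)
  -- ρB is PSD
  have hsmulpsd : ∀ z, ((P z : ℂ) • σ z).PosSemidef := by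
    intro z
    constructor
    · have h1 := (hσ z).1
      rw [Matrix.IsHermitian, Matrix.conjTranspose_smul, h1]
      congr 1
      simp [Complex.star_def, Complex.conj_ofReal]
    · intro x
      have e : (x.sum fun i xi => x.sum fun j xj => star xi * ((P z : ℂ) • σ z) i j * xj) =
          (P z : ℂ) * (x.sum fun i xi => x.sum fun j xj => star xi * σ z i j * xj) := by
        simp only [Finsupp.mul_sum, Matrix.smul_apply, smul_eq_mul]
        exact Finsupp.sum_congr fun i _ => Finsupp.sum_congr fun j _ => by ring
      rw [e]
      have h0 : (0 : ℂ) ≤ (P z : ℂ) := by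
        rw [show ((0:ℂ) = ((0:ℝ):ℂ)) from by norm_num]
        exact_mod_cast hP z
      exact mul_nonneg h0 ((hσ z).2 x)
  have hρBpsd : ρB.PosSemidef := by
    rw [hρB]
    exact Finset.sum_induction _ _ (fun a b ha hb => ha.add hb)
      Matrix.PosSemidef.zero (fun z _ => hsmulpsd z)
  set F : Multiset ℝ := spec hBρ with hFdef
  have hFnn : ∀ t ∈ F, 0 ≤ t := by
    intro t ht
    obtain ⟨i, -, rfl⟩ := Multiset.mem_map.mp ht
    exact hρBpsd.eigenvalues_nonneg i
  have htrρB : ρB.trace = 1 := by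
    rw [hρB, trace_sum]
    have : ∀ z : ZMod d, ((P z : ℂ) • σ z).trace = (P z : ℂ) := by
      intro z
      rw [trace_smul, hσtr z, smul_eq_mul, mul_one]
    rw [Finset.sum_congr rfl fun z _ => this z]
    exact_mod_cast congrArg (fun x : ℝ => (x : ℂ)) hPsum
  have hFsum : F.sum = 1 := spec_sum_real _ 1 htrρB
  -- the scaled eigenvalue multisets
  set Eρ : ZMod d → Multiset ℝ := fun z => (E z).map (fun t => P z * t) with hEρdef
  have hEρnn : ∀ z, ∀ t ∈ Eρ z, 0 ≤ t := by
    intro z t ht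
    obtain ⟨s, hs, rfl⟩ := Multiset.mem_map.mp ht
    exact mul_nonneg (hP z) (hEnn z s hs)
  have hEρsum : ∀ z, (Eρ z).sum = P z := by
    intro z
    rw [hEρdef]
    simp only
    rw [map_mul_sum, hEsum z, mul_one]
  -- spec of ρYB
  have hρYB' : ρYB = Matrix.reindex (Equiv.prodComm B (ZMod d)) (Equiv.prodComm B (ZMod d))
      (Matrix.blockDiagonal (fun y : ZMod d => ((P y : ℝ) : ℂ) • σ y)) := by
    rw [hρYB]
    ext ⟨p, b⟩ ⟨q, c⟩
    by_cases h : p = q <;>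
      simp [Matrix.reindex_apply, Matrix.submatrix_apply, Matrix.blockDiagonal_apply, h]
  have hspecYBρ : spec hYBρ = ∑ y : ZMod d, Eρ y := by
    apply spec_unique
    have hcp : ρYB.charpoly = ∏ y : ZMod d, ∏ i : B,
        (X - C (((P y * (hσ y).1.eigenvalues i : ℝ)) : ℂ)) := by
      rw [hρYB', charpoly_reindex, charpoly_blockDiagonal]
      exact Finset.prod_congr rfl fun y _ => charpoly_hermitian_smul _ (hσ y).1
    rw [hcp, roots_prod _ _ (Finset.prod_ne_zero_iff.mpr fun y _ =>
      (monic_prod_of_monic _ _ fun i _ => monic_X_sub_C _).ne_zero)]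
    rw [map_msum, bind_eq_sum]
    refine Finset.sum_congr rfl fun y _ => ?_
    rw [roots_prod_X_sub_C']
    rw [hEρdef]
    simp only [hEdef, spec, Multiset.map_map]
    rfl
  -- spec of ψXYB
  have hψXYB' : ψXYB = Matrix.reindex (Equiv.prodComm B (ZMod d × ZMod d)) (Equiv.prodComm B (ZMod d × ZMod d))
      (Matrix.blockDiagonal (fun p : ZMod d × ZMod d =>
        (((d : ℝ)⁻¹ * P (p.2 - p.1) : ℝ) : ℂ) • σ (p.2 - p.1))) := by
    rw [hψXYB]
    ext ⟨p, b⟩ ⟨q, c⟩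
    by_cases h : p = q <;>
      simp [Matrix.reindex_apply, Matrix.submatrix_apply, Matrix.blockDiagonal_apply, h,
        mul_assoc]
  have hspecXYB : spec hXYB = ∑ p : ZMod d × ZMod d,
      (Eρ (p.2 - p.1)).map (fun t => (d : ℝ)⁻¹ * t) := by
    apply spec_unique
    have hcp : ψXYB.charpoly = ∏ p : ZMod d × ZMod d, ∏ i : B,
        (X - C ((((d : ℝ)⁻¹ * P (p.2 - p.1)) * (hσ (p.2 - p.1)).1.eigenvalues i : ℝ) : ℂ)) := by
      rw [hψXYB', charpoly_reindex, charpoly_blockDiagonal]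
      exact Finset.prod_congr rfl fun p _ => charpoly_hermitian_smul _ (hσ _).1
    rw [hcp, roots_prod _ _ (Finset.prod_ne_zero_iff.mpr fun p _ =>
      (monic_prod_of_monic _ _ fun i _ => monic_X_sub_C _).ne_zero)]
    rw [map_msum, bind_eq_sum]
    refine Finset.sum_congr rfl fun p _ => ?_
    rw [roots_prod_X_sub_C']
    rw [hEρdef]
    simp only [hEdef, spec, Multiset.map_map]
    refine Multiset.map_congr rfl fun i _ => ?_
    simp only [Function.comp_apply]
    push_cast
    ring
  -- spec of ψYB
  have hψYB' : ψYB = Matrix.reindex (Equiv.prodComm B (ZMod d)) (Equiv.prodComm B (ZMod d))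
      (Matrix.blockDiagonal (fun _ : ZMod d => (((d : ℝ)⁻¹ : ℝ) : ℂ) • ρB)) := by
    rw [hψYB, hρB]
    ext ⟨p, b⟩ ⟨q, c⟩
    by_cases h : p = q <;>
      simp [Matrix.reindex_apply, Matrix.submatrix_apply, Matrix.blockDiagonal_apply, h,
        Matrix.sum_apply, Matrix.smul_apply, smul_eq_mul, Finset.mul_sum]
  have hspecYB : spec hYB = ∑ _y : ZMod d, F.map (fun t => (d : ℝ)⁻¹ * t) := by
    apply spec_unique
    have hcp : ψYB.charpoly = ∏ _y : ZMod d, ∏ i : B,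
        (X - C ((((d : ℝ)⁻¹ * hBρ.eigenvalues i : ℝ)) : ℂ)) := by
      rw [hψYB', charpoly_reindex, charpoly_blockDiagonal]
      exact Finset.prod_congr rfl fun y _ => charpoly_hermitian_smul _ hBρ
    rw [hcp, roots_prod _ _ (Finset.prod_ne_zero_iff.mpr fun y _ =>
      (monic_prod_of_monic _ _ fun i _ => monic_X_sub_C _).ne_zero)]
    rw [map_msum, bind_eq_sum]
    refine Finset.sum_congr rfl fun y _ => ?_
    rw [roots_prod_X_sub_C']
    simp only [hFdef, spec, Multiset.map_map]
    rfl
  have arith : ∀ S' : ℝ, (d : ℝ) * ((d : ℝ)⁻¹ * S' + (d : ℝ)⁻¹ * L * 1) = S' + L := by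
    intro S'
    field_simp
  -- entropies via multisets
  have hSYBρ : vnEntropy hYBρ = ∑ z : ZMod d, ((Eρ z).map f).sum := by
    rw [vnEntropy_spec, hspecYBρ, map_sum_msum]
  have hSBρ : vnEntropy hBρ = (F.map f).sum := vnEntropy_spec hBρ
  have hSXYB : vnEntropy hXYB = ∑ z : ZMod d, ((Eρ z).map f).sum + L := by
    rw [vnEntropy_spec, hspecXYB, map_sum_msum]
    have hterm : ∀ p : ZMod d × ZMod d,
        (((Eρ (p.2 - p.1)).map (fun t => (d : ℝ)⁻¹ * t)).map f).sum
          = (d : ℝ)⁻¹ * ((Eρ (p.2 - p.1)).map f).sum + (d : ℝ)⁻¹ * L * P (p.2 - p.1) := by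
      intro p
      rw [inner_sum _ (hEρnn _) hd, hEρsum]
    rw [Finset.sum_congr rfl fun p _ => hterm p]
    rw [Fintype.sum_prod_type]
    have hshift : ∀ g : ZMod d → ℝ, ∀ x : ZMod d, ∑ y : ZMod d, g (y - x) = ∑ z, g z := by
      intro g x
      exact Fintype.sum_equiv (Equiv.subRight x) _ _ (fun y => rfl)
    rw [Finset.sum_congr rfl fun x _ => hshift
      (fun z => (d : ℝ)⁻¹ * ((Eρ z).map f).sum + (d : ℝ)⁻¹ * L * P z) x]
    rw [Finset.sum_const, Finset.card_univ, ZMod.card, nsmul_eq_mul]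
    rw [Finset.sum_add_distrib, ← Finset.mul_sum (a := (d : ℝ)⁻¹),
      ← Finset.mul_sum (a := (d : ℝ)⁻¹ * L), hPsum]
    exact arith _
  have hSYB : vnEntropy hYB = (F.map f).sum + L := by
    rw [vnEntropy_spec, hspecYB, map_sum_msum]
    rw [Finset.sum_congr rfl fun y _ => inner_sum F hFnn hd]
    rw [hFsum, Finset.sum_const, Finset.card_univ, ZMod.card, nsmul_eq_mul]
    have := arith ((F.map f).sum)
    rw [mul_one] at this ⊢
    exact this
  rw [hSXYB, hSYB, hSYBρ, hSBρ]
  ring
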